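/- arXiv:2412.20569 — 4 statements merged into one kernel-verified Lean document; each statement's English description precedes it below -/
import Mathlib

section
/- For every fixed σ ≥ 0 and β, γ > 0 satisfying β > γ(1+σ), and for every c satisfying c ≥ 2·√((β − (1+σ)γ)/(1+σ)), the planar system I'(y) = V(y), V'(y) = −c·V(y) − β·I(y)·((1 − I(y) − V(y)/c)/(1 + σ·(1 − I(y) − V(y)/c)) − γ/β) has a heteroclinic orbit connecting the saddle Ā = (1 − γ/(β−σγ), 0) and the node B̄ = (0, 0): there exist continuously differentiable functions I, V : ℝ → ℝ satisfying the system for all y ∈ ℝ with (I(y), V(y)) → (1 − γ/(β−σγ), 0) as y → −∞ and (I(y), V(y)) → (0, 0) as y → +∞. -/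
open Set Filter Topology Metric

noncomputable section

namespace SISHet


variable {v : ℝ × ℝ → ℝ × ℝ} {K : NNReal} {C : ℝ}

/-- Global existence for bounded Lipschitz time-independent fields on `ℝ × ℝ`. -/
lemma glob_exist (hv : LipschitzWith K v) (hC : ∀ x, ‖v x‖ ≤ C) (x₀ : ℝ × ℝ) :
    ∃ f : ℝ → ℝ × ℝ, f 0 = x₀ ∧ ∀ t, HasDerivAt f (v (f t)) t := by
  have key : ∀ n : ℕ, ∃ f : ℝ → ℝ × ℝ, f 0 = x₀ ∧
      ∀ t ∈ Ioo (-(n + 1 : ℝ)) (n + 1), HasDerivAt f (v (f t)) t := by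
    intro n
    have hC0 : 0 ≤ C := le_trans (norm_nonneg _) (hC x₀)
    have hpl : IsPicardLindelof (fun _ x => v x) (tmin := -(n + 1 : ℝ)) (tmax := n + 1)
        ⟨0, by constructor <;> nlinarith [n.cast_nonneg (α := ℝ)]⟩ x₀
        ⟨C * (n + 1), by positivity⟩ 0 ⟨C, hC0⟩ K :=
      IsPicardLindelof.of_time_independent (fun x _ => hC x) hv.lipschitzOnWith (by
        apply le_of_eq
        simp only [sub_zero, zero_sub, neg_neg, max_self, NNReal.coe_mk]
        simp only [NNReal.coe_zero, sub_zero]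
        rfl)
    obtain ⟨f, hf0, hf⟩ := hpl.exists_eq_forall_mem_Icc_hasDerivWithinAt₀
    exact ⟨f, hf0, fun t ht => (hf t (Ioo_subset_Icc_self ht)).hasDerivAt
      (Icc_mem_nhds ht.1 ht.2)⟩
  choose F hF0 hFd using key
  have heqn : ∀ n m : ℕ, n ≤ m → EqOn (F n) (F m) (Ioo (-(n + 1 : ℝ)) (n + 1)) := by
    intro n m hnm
    have hsub : Ioo (-(n + 1 : ℝ)) (n + 1) ⊆ Ioo (-(m + 1 : ℝ)) (m + 1) := by
      apply Ioo_subset_Ioo <;> · simp only [neg_le_neg_iff, add_le_add_iff_right]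
                                 exact_mod_cast hnm
    have h0 : (0 : ℝ) ∈ Ioo (-(n + 1 : ℝ)) (n + 1) := by
      constructor <;> nlinarith [n.cast_nonneg (α := ℝ)]
    exact ODE_solution_unique_of_mem_Ioo (v := fun _ x => v x) (s := fun _ => univ)
      (fun _ _ => hv.lipschitzOnWith) h0
      (fun t ht => ⟨hFd n t ht, trivial⟩)
      (fun t ht => ⟨hFd m t (hsub ht), trivial⟩)
      (by rw [hF0, hF0])
  refine ⟨fun t => F ⌊|t|⌋₊ t, by simpa using hF0 0, ?_⟩
  intro t
  have hmemt : ∀ s : ℝ, s ∈ Ioo (-(⌊|s|⌋₊ + 1 : ℝ)) (⌊|s|⌋₊ + 1) := by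
    intro s
    have := Nat.lt_floor_add_one |s|
    constructor
    · nlinarith [abs_nonneg s, neg_abs_le s]
    · nlinarith [le_abs_self s]
  have hmem : ∀ s : ℝ, |s| < |t| + 1 → F ⌊|s|⌋₊ s = F (⌊|t|⌋₊ + 1) s := by
    intro s hs
    have h1 : ⌊|s|⌋₊ ≤ ⌊|t|⌋₊ + 1 := by
      have h2 : |s| < ((⌊|t|⌋₊ + 2 : ℕ) : ℝ) := by
        push_cast
        nlinarith [Nat.lt_floor_add_one |t|]
      have := (Nat.floor_lt (abs_nonneg s)).2 h2
      omega
    exact heqn _ _ h1 (hmemt s)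
  have hnhds : {s : ℝ | |s| < |t| + 1} ∈ 𝓝 t := by
    have : IsOpen {s : ℝ | |s| < |t| + 1} := isOpen_lt continuous_abs continuous_const
    exact this.mem_nhds (by simp [abs_lt]; constructor <;> nlinarith [abs_nonneg t, neg_abs_le t, le_abs_self t])
  have hev : (fun s => F ⌊|s|⌋₊ s) =ᶠ[𝓝 t] F (⌊|t|⌋₊ + 1) :=
    eventually_of_mem hnhds hmem
  have htmem : t ∈ Ioo (-((⌊|t|⌋₊ + 1 : ℕ) + 1 : ℝ)) ((⌊|t|⌋₊ + 1 : ℕ) + 1) := by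
    have := hmemt t
    have h1 : (-(⌊|t|⌋₊ + 1 : ℝ)) ≥ -((⌊|t|⌋₊ + 1 : ℕ) + 1 : ℝ) := by push_cast; linarith
    have h2 : ((⌊|t|⌋₊ + 1 : ℝ)) ≤ ((⌊|t|⌋₊ + 1 : ℕ) + 1 : ℝ) := by push_cast; linarith
    exact ⟨lt_of_le_of_lt h1 this.1, lt_of_lt_of_le this.2 h2⟩
  have hD := hFd (⌊|t|⌋₊ + 1) t htmem
  have hval : F ⌊|t|⌋₊ t = F (⌊|t|⌋₊ + 1) t := hmem t (by linarith [lt_add_one |t|])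
  rw [show (fun s => F ⌊|s|⌋₊ s) t = F (⌊|t|⌋₊ + 1) t from hval]
  exact hD.congr_of_eventuallyEq hev

/-- Global uniqueness. -/
lemma glob_unique (hv : LipschitzWith K v) {f g : ℝ → ℝ × ℝ}
    (hf : ∀ t, HasDerivAt f (v (f t)) t) (hg : ∀ t, HasDerivAt g (v (g t)) t)
    {t₀ : ℝ} (h : f t₀ = g t₀) : f = g := by
  funext t
  have hmem : t ∈ Ioo (min t₀ t - 1) (max t₀ t + 1) :=
    ⟨by have := min_le_right t₀ t; linarith, by have := le_max_right t₀ t; linarith⟩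
  have hmem0 : t₀ ∈ Ioo (min t₀ t - 1) (max t₀ t + 1) :=
    ⟨by have := min_le_left t₀ t; linarith, by have := le_max_left t₀ t; linarith⟩
  exact ODE_solution_unique_of_mem_Ioo (v := fun _ x => v x) (s := fun _ => univ)
    (fun _ _ => hv.lipschitzOnWith) hmem0
    (fun s _ => ⟨hf s, trivial⟩) (fun s _ => ⟨hg s, trivial⟩) h hmem




/-- First component of a derivative of a curve in the plane. -/
lemma hasDerivAt_fst {f : ℝ → ℝ × ℝ} {d : ℝ × ℝ} {t : ℝ} (h : HasDerivAt f d t) :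
    HasDerivAt (fun s => (f s).1) d.1 t := by
  have := (ContinuousLinearMap.fst ℝ ℝ ℝ).hasFDerivAt.comp_hasDerivAt t h
  simpa [Function.comp_def] using this

lemma hasDerivAt_snd {f : ℝ → ℝ × ℝ} {d : ℝ × ℝ} {t : ℝ} (h : HasDerivAt f d t) :
    HasDerivAt (fun s => (f s).2) d.2 t := by
  have := (ContinuousLinearMap.snd ℝ ℝ ℝ).hasFDerivAt.comp_hasDerivAt t h
  simpa [Function.comp_def] using this

/-- If a scalar quantity is `< 0`, or `= 0` with strictly negative derivative, it stays `≤ 0`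
for a short time. -/
lemma stay {x d : ℝ → ℝ} (hx : ∀ t, HasDerivAt x (d t) t) (hd : Continuous d) {τ : ℝ}
    (h : x τ < 0 ∨ (x τ = 0 ∧ d τ < 0)) :
    ∃ δ > 0, ∀ s ∈ Icc τ (τ + δ), x s ≤ 0 := by
  rcases h with h | ⟨h0, hneg⟩
  · have hc : ContinuousAt x τ := (hx τ).continuousAt
    have hm : x ⁻¹' (Iio 0) ∈ 𝓝 τ := hc.preimage_mem_nhds (Iio_mem_nhds h)
    obtain ⟨ε, hε, hball⟩ := Metric.mem_nhds_iff.1 hm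
    refine ⟨ε / 2, by linarith, fun s hs => ?_⟩
    have : s ∈ Metric.ball τ ε := by
      rw [Metric.mem_ball, Real.dist_eq, abs_lt]
      constructor <;> [linarith [hs.1]; linarith [hs.2]]
    exact le_of_lt (hball this)
  · have hc : ContinuousAt d τ := hd.continuousAt
    have hm : d ⁻¹' (Iio 0) ∈ 𝓝 τ := hc.preimage_mem_nhds (Iio_mem_nhds hneg)
    obtain ⟨ε, hε, hball⟩ := Metric.mem_nhds_iff.1 hm
    refine ⟨ε / 2, by linarith, fun s hs => ?_⟩
    have hanti : AntitoneOn x (Icc τ (τ + ε / 2)) := by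
      apply antitoneOn_of_deriv_nonpos (convex_Icc _ _)
      · exact (Differentiable.continuous (fun t => (hx t).differentiableAt)).continuousOn
      · intro u hu
        exact ((hx u).differentiableAt).differentiableWithinAt
      · intro u hu
        rw [interior_Icc] at hu
        rw [(hx u).deriv]
        have : u ∈ Metric.ball τ ε := by
          rw [Metric.mem_ball, Real.dist_eq, abs_lt]
          constructor <;> [linarith [hu.1]; linarith [hu.2]]
        exact le_of_lt (hball this)
    have := hanti (left_mem_Icc.2 (by linarith)) hs hs.1
    linarith




/-- If `f` has derivative `d` everywhere, `f` converges at `+∞` and `d` converges at `+∞`,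
then the limit of `d` is `0`. -/
lemma deriv_limit_zero_atTop {f d : ℝ → ℝ} (hf : ∀ t, HasDerivAt f (d t) t) {L a : ℝ}
    (hL : Tendsto f atTop (𝓝 L)) (ha : Tendsto d atTop (𝓝 a)) : a = 0 := by
  have hcont : Continuous f := (Differentiable.continuous fun t => (hf t).differentiableAt)
  have key : ∀ n : ℕ, ∃ ξ ∈ Ioo (n:ℝ) (n+1), d ξ = f (n+1) - f n := by
    intro n
    obtain ⟨ξ, hξ, hd⟩ := exists_hasDerivAt_eq_slope f d (by linarith : (n:ℝ) < n+1)
      hcont.continuousOn (fun x _ => hf x)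
    refine ⟨ξ, hξ, ?_⟩
    rw [hd, show (n:ℝ)+1-(n:ℝ) = 1 by ring, div_one]
  choose ξ hξm hξd using key
  have hξtop : Tendsto ξ atTop atTop := by
    apply tendsto_atTop_mono (fun n => (hξm n).1.le)
    exact tendsto_natCast_atTop_atTop
  have h2 : Tendsto (fun n : ℕ => d (ξ n)) atTop (𝓝 a) := ha.comp hξtop
  have h1 : Tendsto (fun n : ℕ => f ((n:ℝ)+1) - f n) atTop (𝓝 (L - L)) := by
    apply Tendsto.sub
    · apply hL.comp
      apply tendsto_atTop_add_const_right
      exact tendsto_natCast_atTop_atTop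
    · exact hL.comp tendsto_natCast_atTop_atTop
  rw [sub_self] at h1
  have : (fun n : ℕ => d (ξ n)) = fun n : ℕ => f ((n:ℝ)+1) - f n := funext fun n => hξd n
  rw [this] at h2
  exact tendsto_nhds_unique h2 h1

lemma deriv_limit_zero_atBot {f d : ℝ → ℝ} (hf : ∀ t, HasDerivAt f (d t) t) {L a : ℝ}
    (hL : Tendsto f atBot (𝓝 L)) (ha : Tendsto d atBot (𝓝 a)) : a = 0 := by
  have hg : ∀ t, HasDerivAt (fun s => f (-s)) (-(d (-t))) t := by
    intro t
    have h1 : HasDerivAt (fun s : ℝ => -s) (-1) t := (hasDerivAt_id t).neg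
    have := (hf (-t)).scomp t h1
    simpa [Function.comp_def] using this
  have hgL : Tendsto (fun s => f (-s)) atTop (𝓝 L) := hL.comp tendsto_neg_atTop_atBot
  have hga : Tendsto (fun s => -(d (-s))) atTop (𝓝 (-a)) :=
    (ha.comp tendsto_neg_atTop_atBot).neg
  have := deriv_limit_zero_atTop hg hgL hga
  linarith


/-- Parameter data for the reduced SIS traveling-wave system. -/
structure Dat : Type where
  σ : ℝ
  β : ℝ
  γ : ℝ
  c : ℝ
  hσ : 0 ≤ σ
  hβ : 0 < β
  hγ : 0 < γ
  hβγ : γ * (1 + σ) < β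
  hc : 2 * Real.sqrt ((β - (1 + σ) * γ) / (1 + σ)) ≤ c

namespace Dat

variable (P : Dat)

def b1 : ℝ := P.β - P.σ * P.γ

def A : ℝ := 1 - P.γ / P.b1

lemma hσ1 : (0:ℝ) < 1 + P.σ := by linarith [P.hσ]

lemma b1_pos : 0 < P.b1 := by
  have := P.hβγ; have := P.hγ; have := P.hσ
  unfold b1; nlinarith

lemma γ_lt_b1 : P.γ < P.b1 := by
  have := P.hβγ; unfold b1; nlinarith [P.hγ, P.hσ]

lemma A_pos : 0 < P.A := by
  have h1 := P.b1_pos; have h2 := P.γ_lt_b1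
  have : P.γ / P.b1 < 1 := (div_lt_one h1).2 h2
  unfold A; linarith

lemma A_lt_one : P.A < 1 := by
  have h1 := P.b1_pos; have h2 := P.hγ
  have : 0 < P.γ / P.b1 := div_pos h2 h1
  unfold A; linarith

/-- `b1 * A = β - (1+σ)γ`. -/
lemma b1_mul_A : P.b1 * P.A = P.β - (1 + P.σ) * P.γ := by
  have h1 := P.b1_pos
  unfold A b1
  have h2 : P.β - P.σ * P.γ ≠ 0 := by unfold b1 at h1; linarith
  field_simp
  ring

def q : ℝ := P.b1 * P.A / (1 + P.σ)

lemma q_pos : 0 < P.q := div_pos (mul_pos P.b1_pos P.A_pos) P.hσ1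

lemma c_pos : 0 < P.c := by
  have h := P.hc
  have hq : (P.β - (1 + P.σ) * P.γ) / (1 + P.σ) = P.q := by rw [q, b1_mul_A]
  have h2 : 0 < Real.sqrt P.q := Real.sqrt_pos.2 P.q_pos
  rw [hq] at h; linarith

lemma four_q_le : 4 * P.q ≤ P.c ^ 2 := by
  have h := P.hc
  have hq : (P.β - (1 + P.σ) * P.γ) / (1 + P.σ) = P.q := by rw [q, b1_mul_A]
  rw [hq] at h
  have h0 : 0 ≤ Real.sqrt P.q := Real.sqrt_nonneg _
  have h1 : (2 * Real.sqrt P.q) ^ 2 ≤ P.c ^ 2 := by nlinarith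
  have h2 : Real.sqrt P.q ^ 2 = P.q := Real.sq_sqrt P.q_pos.le
  nlinarith

/-- Denominator. -/
def Dn (J : ℝ) : ℝ := 1 + P.σ * (1 - J)

lemma one_le_Dn {J : ℝ} (hJ : J ≤ 1) : 1 ≤ P.Dn J := by
  have := P.hσ; unfold Dn; nlinarith

lemma Dn_pos {J : ℝ} (hJ : J ≤ 1) : 0 < P.Dn J := lt_of_lt_of_le one_pos (P.one_le_Dn hJ)

lemma Dn_le {J : ℝ} (hJ : 0 ≤ J) : P.Dn J ≤ 1 + P.σ := by
  have := P.hσ; unfold Dn; nlinarith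

def h (J : ℝ) : ℝ := (P.A - J) / P.Dn J

lemma h_nonneg {J : ℝ} (hJ : J ≤ P.A) : 0 ≤ P.h J := by
  have h1 := P.Dn_pos (le_trans hJ P.A_lt_one.le)
  exact div_nonneg (by linarith) h1.le

lemma h_le_A {J : ℝ} (h0 : 0 ≤ J) (hJ : J ≤ P.A) : P.h J ≤ P.A := by
  have h1 := P.one_le_Dn (le_trans hJ P.A_lt_one.le)
  have h2 : P.h J ≤ P.A - J := by
    rw [h, div_le_iff₀ (by linarith)]
    nlinarith
  linarith

/-- Key difference formula for `h`. -/
lemma h_sub {J J' : ℝ} (hJ : J ≤ 1) (hJ' : J' ≤ 1) :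
    P.h J - P.h J' = (J' - J) * (1 + P.σ * (1 - P.A)) / (P.Dn J * P.Dn J') := by
  have h1 := P.Dn_pos hJ
  have h2 := P.Dn_pos hJ'
  rw [h, h, div_sub_div _ _ h1.ne' h2.ne']
  congr 1
  unfold Dn
  ring

lemma h_antitone {J J' : ℝ} (h0 : J ≤ J') (hJ' : J' ≤ 1) : P.h J' ≤ P.h J := by
  have h1 := P.Dn_pos (le_trans h0 hJ')
  have h2 := P.Dn_pos hJ'
  have h3 := P.hσ
  have h4 := P.A_lt_one
  have := P.h_sub (le_trans h0 hJ') hJ'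
  have hpos : 0 ≤ (J' - J) * (1 + P.σ * (1 - P.A)) / (P.Dn J * P.Dn J') := by
    have hA : 0 ≤ 1 + P.σ * (1 - P.A) := by nlinarith
    apply div_nonneg (by nlinarith) (by positivity)
  linarith

lemma h_zero : P.h 0 = P.A / (1 + P.σ) := by
  unfold h Dn; norm_num

lemma h_lt_of_pos {J : ℝ} (h0 : 0 < J) (hJ : J ≤ 1) : P.h J < P.h 0 := by
  have h1 := P.Dn_pos hJ
  have h2 := P.Dn_pos (le_refl (1:ℝ))
  have h2' : 0 < P.Dn 0 := P.Dn_pos (by norm_num)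
  have h3 := P.hσ
  have h4 := P.A_lt_one
  have hd := P.h_sub (by norm_num : (0:ℝ) ≤ 1) hJ
  have hA : 0 < 1 + P.σ * (1 - P.A) := by nlinarith
  have hpos : 0 < (J - 0) * (1 + P.σ * (1 - P.A)) / (P.Dn 0 * P.Dn J) := by
    apply div_pos (by nlinarith) (by positivity)
  linarith

/-- Key strict bound: on `0 < J ≤ 1`, `b1 * h J < c^2/4`. -/
lemma b1_h_lt {J : ℝ} (h0 : 0 < J) (hJ : J ≤ 1) : 4 * (P.b1 * P.h J) < P.c ^ 2 := by
  have hlt : P.h J < P.h 0 := P.h_lt_of_pos h0 hJ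
  have : P.b1 * P.h 0 = P.q := by
    rw [h_zero, q]; field_simp
  nlinarith [P.four_q_le, P.b1_pos]


/-- The (unclamped) planar vector field in `(I, J)` coordinates, `J = I + V/c`. -/
def vf (p : ℝ × ℝ) : ℝ × ℝ := (P.c * (p.2 - p.1), -(P.b1 / P.c) * p.1 * P.h p.2)

/-- Clamp to `[0, A]`. -/
def cl (x : ℝ) : ℝ := max 0 (min x P.A)

def proj (p : ℝ × ℝ) : ℝ × ℝ := (P.cl p.1, P.cl p.2)

/-- The clamped (globally Lipschitz, bounded) field. -/
def w (p : ℝ × ℝ) : ℝ × ℝ := P.vf (P.proj p)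

lemma cl_eq {x : ℝ} (h0 : 0 ≤ x) (h1 : x ≤ P.A) : P.cl x = x := by
  unfold cl; rw [min_eq_left h1, max_eq_right h0]

lemma cl_mem (x : ℝ) : P.cl x ∈ Icc (0:ℝ) P.A := by
  unfold cl
  constructor
  · exact le_max_left _ _
  · exact max_le P.A_pos.le (min_le_right _ _)

/-- The compact square. -/
def Sq : Set (ℝ × ℝ) := Icc (0:ℝ) P.A ×ˢ Icc (0:ℝ) P.A

lemma proj_mem (p : ℝ × ℝ) : P.proj p ∈ P.Sq := ⟨P.cl_mem p.1, P.cl_mem p.2⟩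

/-- The invariant region `R`: `0 ≤ I ≤ A`, `I/2 ≤ J ≤ I`. -/
def Rg : Set (ℝ × ℝ) := {p | p.1 ≤ P.A ∧ p.2 ≤ p.1 ∧ p.1 ≤ 2 * p.2}

lemma Rg_bounds {p : ℝ × ℝ} (hp : p ∈ P.Rg) :
    0 ≤ p.2 ∧ p.2 ≤ p.1 ∧ p.1 ≤ P.A ∧ p.2 ≤ P.A ∧ 0 ≤ p.1 := by
  obtain ⟨h1, h2, h3⟩ := hp
  refine ⟨by linarith, h2, h1, by linarith, by linarith⟩

lemma isClosed_Rg : IsClosed P.Rg := by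
  have h1 : IsClosed {p : ℝ × ℝ | p.1 ≤ P.A} := isClosed_le continuous_fst continuous_const
  have h2 : IsClosed {p : ℝ × ℝ | p.2 ≤ p.1} := isClosed_le continuous_snd continuous_fst
  have h3 : IsClosed {p : ℝ × ℝ | p.1 ≤ 2 * p.2} :=
    isClosed_le continuous_fst (continuous_const.mul continuous_snd)
  have : P.Rg = {p : ℝ × ℝ | p.1 ≤ P.A} ∩ {p | p.2 ≤ p.1} ∩ {p | p.1 ≤ 2 * p.2} := by
    ext p; simp [Rg, and_assoc]
  rw [this]
  exact (h1.inter h2).inter h3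

lemma proj_eq {p : ℝ × ℝ} (hp : p ∈ P.Rg) : P.proj p = p := by
  obtain ⟨h0, h1, h2, h3, h4⟩ := P.Rg_bounds hp
  unfold proj
  rw [P.cl_eq h4 h2, P.cl_eq h0 h3]

lemma w_eq {p : ℝ × ℝ} (hp : p ∈ P.Rg) : P.w p = P.vf p := by
  unfold w; rw [P.proj_eq hp]

lemma contDiffOn_vf : ContDiffOn ℝ 1 P.vf P.Sq := by
  apply ContDiffOn.prodMk
  · exact (contDiff_const.mul (contDiff_snd.sub contDiff_fst)).contDiffOn
  · apply ContDiffOn.mul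
    · exact (contDiff_const.mul contDiff_fst).contDiffOn
    · apply ContDiffOn.div
      · exact (contDiff_const.sub contDiff_snd).contDiffOn
      · exact (contDiff_const.add (contDiff_const.mul
          (contDiff_const.sub contDiff_snd))).contDiffOn
      · intro p hp
        have : 0 < P.Dn p.2 := P.Dn_pos (le_trans hp.2.2 P.A_lt_one.le)
        unfold Dn at this
        exact this.ne'

lemma isCompact_Sq : IsCompact P.Sq := isCompact_Icc.prod isCompact_Icc

lemma convex_Sq : Convex ℝ P.Sq := (convex_Icc _ _).prod (convex_Icc _ _)

lemma exists_lipschitz : ∃ K : NNReal, 1 ≤ K ∧ LipschitzWith K P.w := by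
  have hU : UniqueDiffOn ℝ P.Sq := by
    apply uniqueDiffOn_convex P.convex_Sq
    rw [show P.Sq = Icc (0:ℝ) P.A ×ˢ Icc (0:ℝ) P.A from rfl, interior_prod_eq]
    simp only [interior_Icc]
    exact (nonempty_Ioo.2 P.A_pos).prod (nonempty_Ioo.2 P.A_pos)
  have hcont : ContinuousOn (fderivWithin ℝ P.vf P.Sq) P.Sq :=
    P.contDiffOn_vf.continuousOn_fderivWithin hU (le_refl _)
  obtain ⟨M, hM⟩ := P.isCompact_Sq.exists_bound_of_continuousOn hcont
  have hlipOn : LipschitzOnWith M.toNNReal P.vf P.Sq := by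
    apply P.convex_Sq.lipschitzOnWith_of_nnnorm_fderivWithin_le
      (P.contDiffOn_vf.differentiableOn (by norm_num))
    intro x hx
    have := hM x hx
    rw [← norm_toNNReal]
    exact Real.toNNReal_mono this
  have hclip : LipschitzWith 1 P.cl := by
    unfold cl
    exact (LipschitzWith.id.min_const P.A).const_max 0
  have hproj : LipschitzWith 1 P.proj := by
    have h1 : LipschitzWith 1 (fun p : ℝ × ℝ => P.cl p.1) :=
      by simpa [Function.comp_def] using hclip.comp LipschitzWith.prod_fst
    have h2 : LipschitzWith 1 (fun p : ℝ × ℝ => P.cl p.2) :=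
      by simpa [Function.comp_def] using hclip.comp LipschitzWith.prod_snd
    have := h1.prodMk h2
    rw [max_self] at this
    exact this
  have hw : LipschitzOnWith (M.toNNReal * 1) P.w univ := by
    apply hlipOn.comp (hproj.lipschitzOnWith)
    intro p _
    exact P.proj_mem p
  refine ⟨max (M.toNNReal * 1) 1, le_max_right _ _, ?_⟩
  have : LipschitzWith (M.toNNReal * 1) P.w := lipschitzOnWith_univ.mp hw
  exact this.weaken (le_max_left _ _)

lemma exists_bound : ∃ C : ℝ, ∀ p, ‖P.w p‖ ≤ C := by
  obtain ⟨C, hC⟩ := P.isCompact_Sq.exists_bound_of_continuousOn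
    (P.contDiffOn_vf.continuousOn)
  exact ⟨C, fun p => hC _ (P.proj_mem p)⟩

def Kc : NNReal := Classical.choose P.exists_lipschitz

lemma one_le_Kc : 1 ≤ P.Kc := (Classical.choose_spec P.exists_lipschitz).1

lemma lip_w : LipschitzWith P.Kc P.w := (Classical.choose_spec P.exists_lipschitz).2

def Cb : ℝ := Classical.choose P.exists_bound

lemma bound_w : ∀ p, ‖P.w p‖ ≤ P.Cb := Classical.choose_spec P.exists_bound

/-- The global flow of the clamped field. -/
def flow (p : ℝ × ℝ) : ℝ → ℝ × ℝ :=
  Classical.choose (glob_exist P.lip_w P.bound_w p)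

lemma flow_zero (p : ℝ × ℝ) : P.flow p 0 = p :=
  (Classical.choose_spec (glob_exist P.lip_w P.bound_w p)).1

lemma flow_deriv (p : ℝ × ℝ) (t : ℝ) : HasDerivAt (P.flow p) (P.w (P.flow p t)) t :=
  (Classical.choose_spec (glob_exist P.lip_w P.bound_w p)).2 t

lemma flow_cont (p : ℝ × ℝ) : Continuous (P.flow p) := by
  have : Differentiable ℝ (P.flow p) := fun t => (P.flow_deriv p t).differentiableAt
  exact this.continuous

lemma flow_unique {f : ℝ → ℝ × ℝ} (hf : ∀ t, HasDerivAt f (P.w (f t)) t) :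
    f = P.flow (f 0) := by
  apply glob_unique P.lip_w hf (P.flow_deriv _) (t₀ := 0)
  rw [P.flow_zero]

lemma flow_shift (p : ℝ × ℝ) (a t : ℝ) :
    P.flow p (a + t) = P.flow (P.flow p a) t := by
  have hg : ∀ t, HasDerivAt (fun s => P.flow p (a + s)) (P.w (P.flow p (a + t))) t := by
    intro t
    have h1 : HasDerivAt (fun s : ℝ => a + s) 1 t := (hasDerivAt_id t).const_add a
    have h2 := (P.flow_deriv p (a + t)).scomp t h1
    simpa [Function.comp_def] using h2
  have h1 := P.flow_unique hg
  have h2 := congrFun h1 t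
  simpa using h2

lemma flow_eq_const {e : ℝ × ℝ} (he : P.w e = 0) : P.flow e = fun _ => e := by
  have hg : ∀ t, HasDerivAt (fun _ : ℝ => e) (P.w e) t := by
    intro t; rw [he]; exact hasDerivAt_const t e
  exact ((P.flow_unique hg).symm : _)

/-- Gronwall: Lipschitz dependence of the flow on the initial condition, `t ≥ 0`. -/
lemma dist_flow_le (p q : ℝ × ℝ) {t : ℝ} (ht : 0 ≤ t) :
    dist (P.flow p t) (P.flow q t) ≤ dist p q * Real.exp (P.Kc * t) := by
  have key := dist_le_of_trajectories_ODE (v := fun _ x => P.w x) (K := P.Kc)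
    (f := P.flow p) (g := P.flow q) (a := 0) (b := t) (δ := dist p q)
    (fun _ => P.lip_w)
    ((P.flow_cont p).continuousOn)
    (fun s _ => (P.flow_deriv p s).hasDerivWithinAt)
    ((P.flow_cont q).continuousOn)
    (fun s _ => (P.flow_deriv q s).hasDerivWithinAt)
    (by rw [P.flow_zero, P.flow_zero])
  have := key t ⟨ht, le_refl t⟩
  simpa using this

lemma continuous_flow_apply (t : ℝ) (ht : 0 ≤ t) : Continuous (fun p => P.flow p t) := by
  have : LipschitzWith (Real.exp (P.Kc * t)).toNNReal (fun p => P.flow p t) := by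
    apply LipschitzWith.of_dist_le_mul
    intro p q
    rw [Real.coe_toNNReal _ (Real.exp_nonneg _)]
    calc dist (P.flow p t) (P.flow q t) ≤ dist p q * Real.exp (P.Kc * t) :=
          P.dist_flow_le p q ht
      _ = Real.exp (P.Kc * t) * dist p q := mul_comm _ _
  exact this.continuous

lemma w_zero_zero : P.w (0, 0) = 0 := by
  have h : ((0:ℝ), (0:ℝ)) ∈ P.Rg := ⟨by simpa using P.A_pos.le, le_refl _, by norm_num⟩
  rw [P.w_eq h]
  unfold vf
  norm_num

lemma h_A : P.h P.A = 0 := by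
  unfold h; simp

lemma AA_mem_Rg : ((P.A, P.A) : ℝ × ℝ) ∈ P.Rg := by
  refine ⟨le_refl _, le_refl _, by nlinarith [P.A_pos]⟩

lemma w_AA : P.w (P.A, P.A) = 0 := by
  rw [P.w_eq P.AA_mem_Rg]
  unfold vf
  rw [P.h_A]
  norm_num

/-- Strict inwardness on the face `I = A`. -/
lemma face3 {p : ℝ × ℝ} (hp : p ∈ P.Rg) (hne : p ≠ (P.A, P.A)) (hface : p.1 = P.A) :
    (P.vf p).1 < 0 := by
  obtain ⟨h0, h1, h2, h3, h4⟩ := P.Rg_bounds hp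
  have hJ : p.2 < P.A := by
    rcases lt_or_eq_of_le (hface ▸ h1) with h | h
    · exact h
    · exfalso; apply hne; ext <;> simp [hface, h]
  unfold vf
  simp only
  nlinarith [P.c_pos]

/-- Strict inwardness on the face `J = I`. -/
lemma face2 {p : ℝ × ℝ} (hp : p ∈ P.Rg) (hne0 : p ≠ (0, 0)) (hneA : p ≠ (P.A, P.A))
    (hface : p.2 = p.1) : (P.vf p).2 - (P.vf p).1 < 0 := by
  obtain ⟨h0, h1, h2, h3, h4⟩ := P.Rg_bounds hp
  have hI0 : 0 < p.1 := by
    rcases lt_or_eq_of_le h4 with h | h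
    · exact h
    · exfalso; apply hne0; ext <;> simp [← h, hface]
  have hIA : p.1 < P.A := by
    rcases lt_or_eq_of_le h2 with h | h
    · exact h
    · exfalso; apply hneA; ext <;> simp [h, hface]
  have hh : 0 < P.h p.2 := by
    rw [h]
    apply div_pos (by rw [hface]; linarith) (P.Dn_pos (by rw [hface]; linarith [P.A_lt_one]))
  unfold vf
  simp only [hface]
  have hb := P.b1_pos
  have hc := P.c_pos
  have : 0 < P.b1 / P.c * p.1 * P.h p.1 := by
    apply mul_pos (mul_pos (div_pos hb hc) hI0)
    rw [← hface]; exact hh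
  nlinarith

/-- Strict inwardness on the face `I = 2J`. -/
lemma face1 {p : ℝ × ℝ} (hp : p ∈ P.Rg) (hne0 : p ≠ (0, 0)) (hface : p.1 = 2 * p.2) :
    (P.vf p).1 - 2 * (P.vf p).2 < 0 := by
  obtain ⟨h0, h1, h2, h3, h4⟩ := P.Rg_bounds hp
  have hJ0 : 0 < p.2 := by
    rcases lt_or_eq_of_le h0 with h | h
    · exact h
    · exfalso; apply hne0; ext <;> simp [← h, hface]
  have hJ1 : p.2 ≤ 1 := le_trans h3 P.A_lt_one.le
  have hkey := P.b1_h_lt hJ0 hJ1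
  have hc := P.c_pos
  have hb := P.b1_pos
  unfold vf
  simp only
  rw [hface]
  have hh : 0 ≤ P.h p.2 := P.h_nonneg h3
  have expand : P.c * (p.2 - 2 * p.2) - 2 * (-(P.b1 / P.c) * (2 * p.2) * P.h p.2)
      = (p.2 / P.c) * (4 * (P.b1 * P.h p.2) - P.c ^ 2) := by
    field_simp
    ring
  rw [expand]
  apply mul_neg_of_pos_of_neg (div_pos hJ0 hc)
  linarith

/-- Forward invariance of the region `Rg`. -/
lemma invariant {p : ℝ × ℝ} (hp : p ∈ P.Rg) : ∀ t, 0 ≤ t → P.flow p t ∈ P.Rg := by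
  set x := P.flow p with hx
  have hxd : ∀ t, HasDerivAt x (P.w (x t)) t := P.flow_deriv p
  have hxc : Continuous x := P.flow_cont p
  set T : Set ℝ := {t | 0 ≤ t ∧ ∀ s ∈ Icc 0 t, x s ∈ P.Rg} with hT
  have hT0 : (0 : ℝ) ∈ T := by
    refine ⟨le_refl _, fun s hs => ?_⟩
    have : s = 0 := le_antisymm hs.2 hs.1
    rw [this]
    rw [hx, P.flow_zero]
    exact hp
  have hTdown : ∀ u ∈ T, ∀ t, 0 ≤ t → t ≤ u → t ∈ T := by
    intro u hu t ht htu
    exact ⟨ht, fun s hs => hu.2 s ⟨hs.1, le_trans hs.2 htu⟩⟩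
  suffices hsuff : ∀ t, 0 ≤ t → t ∈ T by
    intro t ht
    exact (hsuff t ht).2 t ⟨ht, le_refl t⟩
  by_contra hcon
  push_neg at hcon
  obtain ⟨t₀, ht₀, ht₀n⟩ := hcon
  have hbdd : BddAbove T := by
    refine ⟨t₀, fun u hu => ?_⟩
    by_contra hgt
    push_neg at hgt
    exact ht₀n (hTdown u hu t₀ ht₀ hgt.le)
  set τ := sSup T with hτ
  have hτ0 : 0 ≤ τ := le_csSup hbdd hT0
  have hmem : ∀ s ∈ Icc (0:ℝ) τ, x s ∈ P.Rg := by
    intro s hs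
    rcases lt_or_eq_of_le hs.2 with h | h
    · obtain ⟨u, huT, hus⟩ := exists_lt_of_lt_csSup ⟨0, hT0⟩ h
      exact huT.2 s ⟨hs.1, hus.le⟩
    · -- s = τ
      subst h
      rcases eq_or_lt_of_le hs.1 with h0 | h0
      · rw [← h0, hx, P.flow_zero]; exact hp
      · -- τ > 0
        have htend : Tendsto x (𝓝[<] τ) (𝓝 (x τ)) :=
          (hxc.tendsto τ).mono_left nhdsWithin_le_nhds
        apply P.isClosed_Rg.mem_of_tendsto htend
        filter_upwards [Ioo_mem_nhdsLT_of_mem ⟨h0, le_refl τ⟩] with u hu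
        obtain ⟨v, hvT, hvs⟩ := exists_lt_of_lt_csSup ⟨0, hT0⟩ hu.2
        exact hvT.2 u ⟨hu.1.le, hvs.le⟩
  have hτT : τ ∈ T := ⟨hτ0, hmem⟩
  have hxτ : x τ ∈ P.Rg := hmem τ ⟨hτ0, le_refl τ⟩
  -- we derive a contradiction by extending past τ
  have hext : ∃ δ > 0, τ + δ ∈ T := by
    by_cases heq : x τ = (0, 0) ∨ x τ = (P.A, P.A)
    · -- equilibrium: the orbit is constant from time τ on
      have hwzero : P.w (x τ) = 0 := by
        rcases heq with h | h <;> rw [h]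
        · exact P.w_zero_zero
        · exact P.w_AA
      refine ⟨1, one_pos, ⟨by linarith, fun s hs => ?_⟩⟩
      rcases le_or_gt s τ with h | h
      · exact hmem s ⟨hs.1, h⟩
      · have hshift : x s = P.flow (x τ) (s - τ) := by
          have e1 : P.flow p s = P.flow p (τ + (s - τ)) :=
            congrArg (P.flow p) (by ring)
          rw [hx, e1]
          exact P.flow_shift p τ (s - τ)
        rw [hshift, P.flow_eq_const hwzero]
        exact hxτ
    · push_neg at heq
      obtain ⟨hne0, hneA⟩ := heq
      -- three linear functionals
      have hwc : Continuous (fun s => P.w (x s)) := (P.lip_w.continuous).comp hxc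
      have hvf : P.w (x τ) = P.vf (x τ) := P.w_eq hxτ
      -- functional 1 : I - 2J ≤ 0
      have hs1 : ∃ δ > 0, ∀ s ∈ Icc τ (τ + δ), (x s).1 - 2 * (x s).2 ≤ 0 := by
        apply stay (d := fun s => (P.w (x s)).1 - 2 * (P.w (x s)).2)
        · intro t
          exact ((hasDerivAt_fst (hxd t)).sub ((hasDerivAt_snd (hxd t)).const_mul 2))
        · exact ((continuous_fst.comp hwc).sub (continuous_const.mul (continuous_snd.comp hwc)))
        · rcases lt_or_eq_of_le hxτ.2.2 with h | h
          · left; linarith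
          · right
            refine ⟨by linarith, ?_⟩
            rw [hvf]
            exact P.face1 hxτ hne0 h
      -- functional 2 : J - I ≤ 0
      have hs2 : ∃ δ > 0, ∀ s ∈ Icc τ (τ + δ), (x s).2 - (x s).1 ≤ 0 := by
        apply stay (d := fun s => (P.w (x s)).2 - (P.w (x s)).1)
        · intro t
          exact ((hasDerivAt_snd (hxd t)).sub (hasDerivAt_fst (hxd t)))
        · exact ((continuous_snd.comp hwc).sub (continuous_fst.comp hwc))
        · rcases lt_or_eq_of_le hxτ.2.1 with h | h
          · left; linarith
          · right
            refine ⟨by linarith, ?_⟩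
            rw [hvf]
            exact P.face2 hxτ hne0 hneA h
      -- functional 3 : I - A ≤ 0
      have hs3 : ∃ δ > 0, ∀ s ∈ Icc τ (τ + δ), (x s).1 - P.A ≤ 0 := by
        apply stay (d := fun s => (P.w (x s)).1)
        · intro t
          exact ((hasDerivAt_fst (hxd t)).sub_const P.A)
        · exact (continuous_fst.comp hwc)
        · rcases lt_or_eq_of_le hxτ.1 with h | h
          · left; linarith
          · right
            refine ⟨by linarith, ?_⟩
            rw [hvf]
            exact P.face3 hxτ hneA h
      obtain ⟨δ1, hδ1, h1⟩ := hs1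
      obtain ⟨δ2, hδ2, h2⟩ := hs2
      obtain ⟨δ3, hδ3, h3⟩ := hs3
      have hδm : 0 < min δ1 (min δ2 δ3) := lt_min hδ1 (lt_min hδ2 hδ3)
      refine ⟨min δ1 (min δ2 δ3), hδm, ⟨by linarith, fun s hs => ?_⟩⟩
      rcases le_or_gt s τ with h | h
      · exact hmem s ⟨hs.1, h⟩
      · have hm1 : s ∈ Icc τ (τ + δ1) :=
          ⟨h.le, le_trans hs.2 (by linarith [min_le_left δ1 (min δ2 δ3)])⟩
        have hm2 : s ∈ Icc τ (τ + δ2) :=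
          ⟨h.le, le_trans hs.2 (by linarith [le_trans (min_le_right δ1 (min δ2 δ3)) (min_le_left δ2 δ3)])⟩
        have hm3 : s ∈ Icc τ (τ + δ3) :=
          ⟨h.le, le_trans hs.2 (by linarith [le_trans (min_le_right δ1 (min δ2 δ3)) (min_le_right δ2 δ3)])⟩
        exact ⟨by linarith [h3 s hm3], by linarith [h2 s hm2], by linarith [h1 s hm1]⟩
  obtain ⟨δ, hδ, hτδ⟩ := hext
  have := le_csSup hbdd hτδ
  linarith

lemma limit_equilibrium {y : ℝ → ℝ × ℝ} (hy : ∀ t, HasDerivAt y (P.w (y t)) t)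
    {e : ℝ × ℝ} (hl : Tendsto y atTop (𝓝 e)) : P.w e = 0 := by
  have hwt : Tendsto (fun t => P.w (y t)) atTop (𝓝 (P.w e)) :=
    (P.lip_w.continuous.tendsto e).comp hl
  have h1 : (P.w e).1 = 0 :=
    deriv_limit_zero_atTop (fun t => hasDerivAt_fst (hy t))
      ((continuous_fst.tendsto e).comp hl) ((continuous_fst.tendsto (P.w e)).comp hwt)
  have h2 : (P.w e).2 = 0 :=
    deriv_limit_zero_atTop (fun t => hasDerivAt_snd (hy t))
      ((continuous_snd.tendsto e).comp hl) ((continuous_snd.tendsto (P.w e)).comp hwt)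
  rw [Prod.ext_iff]
  exact ⟨by simpa using h1, by simpa using h2⟩

lemma limit_equilibrium_bot {y : ℝ → ℝ × ℝ} (hy : ∀ t, HasDerivAt y (P.w (y t)) t)
    {e : ℝ × ℝ} (hl : Tendsto y atBot (𝓝 e)) : P.w e = 0 := by
  have hwt : Tendsto (fun t => P.w (y t)) atBot (𝓝 (P.w e)) :=
    (P.lip_w.continuous.tendsto e).comp hl
  have h1 : (P.w e).1 = 0 :=
    deriv_limit_zero_atBot (fun t => hasDerivAt_fst (hy t))
      ((continuous_fst.tendsto e).comp hl) ((continuous_fst.tendsto (P.w e)).comp hwt)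
  have h2 : (P.w e).2 = 0 :=
    deriv_limit_zero_atBot (fun t => hasDerivAt_snd (hy t))
      ((continuous_snd.tendsto e).comp hl) ((continuous_snd.tendsto (P.w e)).comp hwt)
  rw [Prod.ext_iff]
  exact ⟨by simpa using h1, by simpa using h2⟩

/-- Classification of equilibria in `Rg`: only `(0,0)` and `(A,A)`. -/
lemma equilibria {e : ℝ × ℝ} (he : e ∈ P.Rg) (hw : P.w e = 0) :
    e = (0, 0) ∨ e = (P.A, P.A) := by
  obtain ⟨h0, h1, h2, h3, h4⟩ := P.Rg_bounds he
  have hv : P.vf e = 0 := by rw [← P.w_eq he, hw]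
  have hc := P.c_pos
  have hb := P.b1_pos
  have hfst : P.c * (e.2 - e.1) = 0 := congrArg Prod.fst hv
  have heq : e.2 = e.1 := by
    rcases mul_eq_zero.1 hfst with h | h
    · exact absurd h hc.ne'
    · linarith
  have hsnd : -(P.b1 / P.c) * e.1 * P.h e.2 = 0 := congrArg Prod.snd hv
  have hbc : P.b1 / P.c ≠ 0 := (div_pos hb hc).ne'
  rcases mul_eq_zero.1 hsnd with h | h
  · rcases mul_eq_zero.1 h with h' | h'
    · exact absurd h' (by simpa using hbc)
    · left
      rw [Prod.ext_iff]
      exact ⟨by simpa using h', by rw [heq]; simpa using h'⟩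
  · -- h e.2 = 0 forces e.2 = A
    have hD := P.Dn_pos (le_trans h3 P.A_lt_one.le)
    rw [Dat.h, div_eq_zero_iff] at h
    have hA2 : e.2 = P.A := by
      rcases h with h | h
      · linarith
      · exact absurd h hD.ne'
    right
    rw [Prod.ext_iff]
    refine ⟨?_, ?_⟩
    · show e.1 = P.A
      rw [← heq]; exact hA2
    · exact hA2

lemma vf_fst_nonpos {p : ℝ × ℝ} (hp : p ∈ P.Rg) : (P.vf p).1 ≤ 0 := by
  obtain ⟨h0, h1, h2, h3, h4⟩ := P.Rg_bounds hp
  have hc := P.c_pos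
  unfold vf
  simp only
  nlinarith

lemma vf_snd_nonpos {p : ℝ × ℝ} (hp : p ∈ P.Rg) : (P.vf p).2 ≤ 0 := by
  obtain ⟨h0, h1, h2, h3, h4⟩ := P.Rg_bounds hp
  have hc := P.c_pos
  have hb := P.b1_pos
  have hh := P.h_nonneg h3
  unfold vf
  simp only
  have : 0 ≤ P.b1 / P.c * p.1 * P.h p.2 :=
    mul_nonneg (mul_nonneg (div_pos hb hc).le h4) hh
  nlinarith

/-- The `I`-component of an orbit is antitone on any convex set of times along which the
orbit is in `Rg`. -/
lemma I_antitoneOn {p : ℝ × ℝ} {s : Set ℝ} (hs : Convex ℝ s)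
    (hR : ∀ t ∈ s, P.flow p t ∈ P.Rg) :
    AntitoneOn (fun t => (P.flow p t).1) s := by
  apply antitoneOn_of_deriv_nonpos hs
  · exact (continuous_fst.comp (P.flow_cont p)).continuousOn
  · intro u _
    exact (hasDerivAt_fst (P.flow_deriv p u)).differentiableAt.differentiableWithinAt
  · intro u hu
    rw [(hasDerivAt_fst (P.flow_deriv p u)).deriv]
    have hmem := hR u (interior_subset hu)
    rw [P.w_eq hmem]
    exact P.vf_fst_nonpos hmem

lemma J_antitoneOn {p : ℝ × ℝ} {s : Set ℝ} (hs : Convex ℝ s)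
    (hR : ∀ t ∈ s, P.flow p t ∈ P.Rg) :
    AntitoneOn (fun t => (P.flow p t).2) s := by
  apply antitoneOn_of_deriv_nonpos hs
  · exact (continuous_snd.comp (P.flow_cont p)).continuousOn
  · intro u _
    exact (hasDerivAt_snd (P.flow_deriv p u)).differentiableAt.differentiableWithinAt
  · intro u hu
    rw [(hasDerivAt_snd (P.flow_deriv p u)).deriv]
    have hmem := hR u (interior_subset hu)
    rw [P.w_eq hmem]
    exact P.vf_snd_nonpos hmem

/-- Initial points near the corner `(A, A)`. -/
def pt (δ : ℝ) : ℝ × ℝ := (P.A - δ, P.A - 2 * δ)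

lemma pt_mem {δ : ℝ} (hδ0 : 0 < δ) (hδ : δ ≤ P.A / 8) : P.pt δ ∈ P.Rg := by
  have hA := P.A_pos
  exact ⟨by simp [pt]; linarith, by simp [pt]; linarith, by simp [pt]; linarith⟩

/-- The orbit from `pt δ` eventually reaches the section `I = 3A/4`. -/
lemma hit {δ : ℝ} (hδ0 : 0 < δ) (hδ : δ ≤ P.A / 8) :
    ∃ T ≥ 0, (P.flow (P.pt δ) T).1 = 3 / 4 * P.A := by
  have hA := P.A_pos
  have hc := P.c_pos
  have hb := P.b1_pos
  have hσ := P.hσ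
  have hmem := P.pt_mem hδ0 hδ
  set x := P.flow (P.pt δ) with hx
  have hinv : ∀ t, 0 ≤ t → x t ∈ P.Rg := P.invariant hmem
  set ε₀ : ℝ := P.b1 / P.c * (3 / 4 * P.A) * (δ / (1 + P.σ)) with hε₀
  have hε₀pos : 0 < ε₀ := by
    apply mul_pos (mul_pos (div_pos hb hc) (by linarith))
    apply div_pos hδ0 (by linarith)
  -- first: some time with I-value ≤ 3A/4
  have hstep : ∃ t ≥ 0, (x t).1 ≤ 3 / 4 * P.A := by
    by_contra hcon
    push_neg at hcon
    set T := 2 * P.A / ε₀ with hT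
    have hTpos : 0 < T := by positivity
    have hImon : AntitoneOn (fun t => (x t).1) (Ici 0) :=
      P.I_antitoneOn (convex_Ici 0) (fun t ht => hinv t ht)
    -- the functional u = I + J + ε₀ t decreases on [0, T]
    have hu : AntitoneOn (fun t => (x t).1 + (x t).2 + ε₀ * t) (Icc 0 T) := by
      apply antitoneOn_of_deriv_nonpos (convex_Icc _ _)
      · apply ContinuousOn.add
        · exact ((continuous_fst.comp (P.flow_cont _)).add
            (continuous_snd.comp (P.flow_cont _))).continuousOn
        · exact (continuous_const.mul continuous_id).continuousOn
      · intro u _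
        apply DifferentiableAt.differentiableWithinAt
        apply DifferentiableAt.add
        · exact ((hasDerivAt_fst (P.flow_deriv _ u)).differentiableAt.add
            (hasDerivAt_snd (P.flow_deriv _ u)).differentiableAt)
        · exact (differentiableAt_id.const_mul ε₀)
      · intro u hu
        rw [interior_Icc] at hu
        have hDer : HasDerivAt (fun t => (x t).1 + (x t).2 + ε₀ * t)
            ((P.w (x u)).1 + (P.w (x u)).2 + ε₀) u := by
          apply HasDerivAt.add
          · exact (hasDerivAt_fst (P.flow_deriv _ u)).add (hasDerivAt_snd (P.flow_deriv _ u))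
          · simpa using (hasDerivAt_id u).const_mul ε₀
        rw [hDer.deriv]
        have hmemu := hinv u hu.1.le
        obtain ⟨g0, g1, g2, g3, g4⟩ := P.Rg_bounds hmemu
        rw [P.w_eq hmemu]
        -- bounds
        have hIub : (x u).1 ≤ P.A - δ := by
          have := hImon (left_mem_Icc.2 (le_refl 0) |>.1 |> fun _ => self_mem_Ici)
          have h5 := hImon self_mem_Ici (mem_Ici.2 hu.1.le) hu.1.le
          simpa [hx, P.flow_zero, pt] using h5
        have hIlb : 3 / 4 * P.A < (x u).1 := hcon u hu.1.le
        have hJub : (x u).2 ≤ P.A - δ := le_trans g1 hIub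
        have hhJ : δ / (1 + P.σ) ≤ P.h ((x u).2) := by
          have h6 : P.h (P.A - δ) ≤ P.h ((x u).2) :=
            P.h_antitone hJub (by linarith [P.A_lt_one])
          have h8 : P.Dn (P.A - δ) ≤ 1 + P.σ := P.Dn_le (by linarith)
          have h9 : 0 < P.Dn (P.A - δ) := P.Dn_pos (by linarith [P.A_lt_one])
          have h7 : δ / (1 + P.σ) ≤ P.h (P.A - δ) := by
            rw [Dat.h, show P.A - (P.A - δ) = δ by ring]
            exact div_le_div_of_nonneg_left hδ0.le h9 h8
          linarith
        have hvf2 : (P.vf (x u)).2 ≤ -ε₀ := by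
          unfold vf
          simp only
          rw [hε₀]
          have hprod : P.b1 / P.c * (3 / 4 * P.A) * (δ / (1 + P.σ))
              ≤ P.b1 / P.c * (x u).1 * P.h ((x u).2) := by
            apply mul_le_mul
            · apply mul_le_mul (le_refl _) hIlb.le (by linarith) (div_pos hb hc).le
            · exact hhJ
            · apply div_nonneg hδ0.le (by linarith)
            · apply mul_nonneg (div_pos hb hc).le (by linarith)
          linarith
        have hvf1 : (P.vf (x u)).1 ≤ 0 := P.vf_fst_nonpos hmemu
        linarith
    have hfinal : (x T).1 + (x T).2 + ε₀ * T ≤ (x 0).1 + (x 0).2 + ε₀ * 0 :=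
      hu (left_mem_Icc.2 hTpos.le) (right_mem_Icc.2 hTpos.le) hTpos.le
    have e1 : (x 0).1 = P.A - δ := by rw [hx, P.flow_zero]; rfl
    have e2 : (x 0).2 = P.A - 2 * δ := by rw [hx, P.flow_zero]; rfl
    rw [e1, e2] at hfinal
    have hT2 : ε₀ * T = 2 * P.A := by
      rw [hT]; field_simp
    have hmemT := hinv T hTpos.le
    obtain ⟨g0, g1, g2, g3, g4⟩ := P.Rg_bounds hmemT
    have hI_T : 3 / 4 * P.A < (x T).1 := hcon T hTpos.le
    nlinarith
  obtain ⟨t, ht0, ht⟩ := hstep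
  -- IVT
  have hcontI : ContinuousOn (fun s => (x s).1) (Icc 0 t) :=
    (continuous_fst.comp (P.flow_cont _)).continuousOn
  have hx0 : (x 0).1 = P.A - δ := by simp [hx, P.flow_zero, pt]
  have hival : (3 / 4 * P.A) ∈ Icc ((x t).1) ((x 0).1) := by
    rw [hx0]
    exact ⟨ht, by linarith⟩
  have := intermediate_value_Icc' ht0 hcontI hival
  obtain ⟨T, hTmem, hTval⟩ := this
  exact ⟨T, hTmem.1, hTval⟩

/-- The region cut at the section: `Rg ∩ {I ≥ 3A/4}`. -/
def Wr : Set (ℝ × ℝ) := P.Rg ∩ {p | 3 / 4 * P.A ≤ p.1}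

lemma isClosed_Wr : IsClosed P.Wr :=
  P.isClosed_Rg.inter (isClosed_le continuous_const continuous_fst)

lemma Rg_subset_Sq : P.Rg ⊆ P.Sq := by
  intro p hp
  obtain ⟨h0, h1, h2, h3, h4⟩ := P.Rg_bounds hp
  exact ⟨⟨h4, h2⟩, ⟨h0, h3⟩⟩

lemma isCompact_Wr : IsCompact P.Wr :=
  P.isCompact_Sq.of_isClosed_subset P.isClosed_Wr
    (subset_trans (inter_subset_left) P.Rg_subset_Sq)

/-- Points on the section that have an orbit segment of length `n` inside `Wr` ending at them. -/
def An (n : ℕ) : Set (ℝ × ℝ) :=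
  {q | (q ∈ P.Rg ∧ q.1 = 3 / 4 * P.A) ∧
    ∃ p, (∀ s ∈ Icc (0:ℝ) (n:ℝ), P.flow p s ∈ P.Wr) ∧ P.flow p (n:ℝ) = q}

lemma isCompact_An (n : ℕ) : IsCompact (P.An n) := by
  set B : Set (ℝ × ℝ) := {p | (∀ s ∈ Icc (0:ℝ) (n:ℝ), P.flow p s ∈ P.Wr) ∧
    (P.flow p (n:ℝ) ∈ P.Rg ∧ (P.flow p (n:ℝ)).1 = 3 / 4 * P.A)} with hB
  have himg : P.An n = (fun p => P.flow p (n:ℝ)) '' B := by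
    ext q
    constructor
    · rintro ⟨⟨hq1, hq2⟩, p, hW, heq⟩
      exact ⟨p, ⟨hW, by rw [heq]; exact ⟨hq1, hq2⟩⟩, heq⟩
    · rintro ⟨p, ⟨hW, hq1, hq2⟩, heq⟩
      exact ⟨⟨heq ▸ hq1, heq ▸ hq2⟩, p, hW, heq⟩
  have hBclosed : IsClosed B := by
    apply IsClosed.inter
    · have : {p : ℝ × ℝ | ∀ s ∈ Icc (0:ℝ) (n:ℝ), P.flow p s ∈ P.Wr}
          = ⋂ s ∈ Icc (0:ℝ) (n:ℝ), (fun p => P.flow p s) ⁻¹' P.Wr := by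
        ext p; simp
      show IsClosed {p : ℝ × ℝ | ∀ s ∈ Icc (0:ℝ) (n:ℝ), P.flow p s ∈ P.Wr}
      rw [this]
      apply isClosed_biInter
      intro s hs
      exact P.isClosed_Wr.preimage (P.continuous_flow_apply s hs.1)
    · apply IsClosed.inter
      · exact P.isClosed_Rg.preimage (P.continuous_flow_apply _ n.cast_nonneg)
      · exact (isClosed_eq (continuous_fst.comp (P.continuous_flow_apply _ n.cast_nonneg))
          continuous_const)
  have hBsub : B ⊆ P.Wr := by
    intro p hp
    have := hp.1 0 ⟨le_refl 0, n.cast_nonneg⟩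
    rwa [P.flow_zero] at this
  have hBcompact : IsCompact B := P.isCompact_Wr.of_isClosed_subset hBclosed hBsub
  rw [himg]
  exact hBcompact.image (P.continuous_flow_apply _ n.cast_nonneg)

lemma An_nonempty (n : ℕ) : (P.An n).Nonempty := by
  have hA := P.A_pos
  have hK1 : (1:ℝ) ≤ P.Kc := by exact_mod_cast P.one_le_Kc
  have hKpos : (0:ℝ) < P.Kc := by linarith
  -- choice of δ
  set δ : ℝ := P.A / 8 * Real.exp (-(P.Kc * n)) with hδdef
  have hK1 : (1:ℝ) ≤ P.Kc := by exact_mod_cast P.one_le_Kc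
  have hKpos' : (0:ℝ) < P.Kc := by linarith
  have hexp1 : Real.exp (-(P.Kc * n)) ≤ 1 := by
    rw [Real.exp_le_one_iff]
    exact neg_nonpos.mpr (mul_nonneg hKpos'.le (n.cast_nonneg (α := ℝ)))
  have hδ0 : 0 < δ := by positivity
  have hδ : δ ≤ P.A / 8 := by
    rw [hδdef]
    nlinarith [Real.exp_pos (-(P.Kc * n))]
  obtain ⟨T, hT0, hTval⟩ := P.hit hδ0 hδ
  set x := P.flow (P.pt δ) with hx
  have hmem := P.pt_mem hδ0 hδ
  have hinv : ∀ t, 0 ≤ t → x t ∈ P.Rg := P.invariant hmem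
  -- Gronwall lower bound on T
  have hTn : (n : ℝ) ≤ T := by
    have hflowAA : P.flow (P.A, P.A) T = (P.A, P.A) := by
      rw [P.flow_eq_const P.w_AA]
    have hgron := P.dist_flow_le (P.pt δ) (P.A, P.A) hT0
    rw [hflowAA] at hgron
    have hdist0 : dist (P.pt δ) (P.A, P.A) = 2 * δ := by
      rw [Prod.dist_eq]
      simp only [pt, Real.dist_eq]
      rw [show P.A - δ - P.A = -δ by ring, show P.A - 2 * δ - P.A = -(2*δ) by ring]
      rw [abs_neg, abs_neg, abs_of_nonneg hδ0.le, abs_of_nonneg (by linarith)]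
      rw [max_eq_right (by linarith)]
    have hdistT : P.A / 4 ≤ dist (x T) (P.A, P.A) := by
      have h1 : dist ((x T).1) P.A ≤ dist (x T) (P.A, P.A) := by
        rw [Prod.dist_eq]
        exact le_max_left _ _
      have h2 : dist ((x T).1) P.A = P.A / 4 := by
        rw [Real.dist_eq, hTval]
        rw [abs_of_nonpos (by linarith)]
        ring
      linarith
    rw [hdist0] at hgron
    -- A/4 ≤ 2δ e^{KT}, δ = A/8 e^{-Kn}
    have hconc : P.A / 4 ≤ 2 * (P.A / 8 * Real.exp (-(P.Kc * n))) * Real.exp (P.Kc * T) := by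
      calc P.A / 4 ≤ dist (x T) (P.A, P.A) := hdistT
        _ ≤ 2 * δ * Real.exp (P.Kc * T) := hgron
        _ = 2 * (P.A / 8 * Real.exp (-(P.Kc * n))) * Real.exp (P.Kc * T) := by rw [hδdef]
    have hge1 : (1:ℝ) ≤ Real.exp (P.Kc * T - P.Kc * n) := by
      have hpos : 0 < Real.exp (-(P.Kc * ↑n)) := Real.exp_pos _
      have hexpid : Real.exp (-(P.Kc * n)) * Real.exp (P.Kc * T)
          = Real.exp (P.Kc * T - P.Kc * n) := by
        rw [← Real.exp_add]; ring_nf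
      nlinarith [hconc]
    rw [Real.one_le_exp_iff] at hge1
    nlinarith
  -- now build the witness
  have hImon : AntitoneOn (fun t => (x t).1) (Ici 0) :=
    P.I_antitoneOn (convex_Ici 0) (fun t ht => hinv t ht)
  refine ⟨x T, ⟨hinv T hT0, hTval⟩, P.flow (P.pt δ) (T - (n:ℝ)), ?_, ?_⟩
  · intro s hs
    have hshift : P.flow (P.flow (P.pt δ) (T - (n:ℝ))) s = x (T - (n:ℝ) + s) :=
      (P.flow_shift (P.pt δ) (T - (n:ℝ)) s).symm
    rw [hshift]
    have ht'0 : 0 ≤ T - (n:ℝ) + s := by linarith [hs.1]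
    have ht'T : T - (n:ℝ) + s ≤ T := by linarith [hs.2]
    refine ⟨hinv _ ht'0, ?_⟩
    have := hImon (mem_Ici.2 ht'0) (mem_Ici.2 hT0) ht'T
    simp only at this
    rw [show (3:ℝ) / 4 * P.A = (x T).1 from hTval.symm]
    exact this
  · have hshift : P.flow (P.flow (P.pt δ) (T - (n:ℝ))) (n:ℝ) = x (T - (n:ℝ) + (n:ℝ)) :=
      (P.flow_shift (P.pt δ) (T - (n:ℝ)) (n:ℝ)).symm
    rw [hshift]
    exact congrArg x (by ring)

lemma An_antitone (n : ℕ) : P.An (n + 1) ⊆ P.An n := by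
  rintro q ⟨hq, p, hW, heq⟩
  refine ⟨hq, P.flow p 1, fun s hs => ?_, ?_⟩
  · have hshift : P.flow (P.flow p 1) s = P.flow p (1 + s) := (P.flow_shift p 1 s).symm
    rw [hshift]
    apply hW
    push_cast
    exact ⟨by linarith [hs.1], by linarith [hs.2]⟩
  · have hshift : P.flow (P.flow p 1) (n:ℝ) = P.flow p (1 + n) := (P.flow_shift p 1 n).symm
    rw [hshift, ← heq]
    exact congrArg (P.flow p) (by push_cast; ring)

lemma exists_qstar : ∃ q, ∀ n : ℕ, q ∈ P.An n := by
  obtain ⟨q, hq⟩ := IsCompact.nonempty_iInter_of_sequence_nonempty_isCompact_isClosed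
    P.An P.An_antitone P.An_nonempty (P.isCompact_An 0) (fun n => (P.isCompact_An n).isClosed)
  exact ⟨q, fun n => mem_iInter.1 hq n⟩

/-- The heteroclinic orbit. -/
def qstar : ℝ × ℝ := Classical.choose P.exists_qstar

lemma qstar_mem (n : ℕ) : P.qstar ∈ P.An n := Classical.choose_spec P.exists_qstar n

def orb : ℝ → ℝ × ℝ := P.flow P.qstar

lemma orb_deriv (t : ℝ) : HasDerivAt P.orb (P.w (P.orb t)) t := P.flow_deriv _ t

lemma qstar_Rg : P.qstar ∈ P.Rg := (P.qstar_mem 0).1.1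

lemma qstar_fst : P.qstar.1 = 3 / 4 * P.A := (P.qstar_mem 0).1.2

/-- Backward part of the orbit lies in `Wr`. -/
lemma orb_mem_Wr {t : ℝ} (ht : t ≤ 0) : P.orb t ∈ P.Wr := by
  obtain ⟨n, hn⟩ := exists_nat_ge (-t)
  obtain ⟨hq, p, hW, heq⟩ := P.qstar_mem n
  have hshift : P.orb t = P.flow p ((n:ℝ) + t) := by
    rw [orb, ← heq]
    exact (P.flow_shift p (n:ℝ) t).symm
  rw [hshift]
  exact hW _ ⟨by linarith, by linarith⟩

lemma orb_mem_Rg (t : ℝ) : P.orb t ∈ P.Rg := by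
  rcases le_or_gt t 0 with h | h
  · exact (P.orb_mem_Wr h).1
  · exact P.invariant P.qstar_Rg t h.le

lemma orb_fst_lb {t : ℝ} (ht : t ≤ 0) : 3 / 4 * P.A ≤ (P.orb t).1 := (P.orb_mem_Wr ht).2

lemma orb_I_antitone : Antitone (fun t => (P.orb t).1) := by
  have := P.I_antitoneOn (convex_univ) (fun t _ => P.orb_mem_Rg t)
  exact fun a b hab => this (mem_univ a) (mem_univ b) hab

lemma orb_J_antitone : Antitone (fun t => (P.orb t).2) := by
  have := P.J_antitoneOn (convex_univ) (fun t _ => P.orb_mem_Rg t)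
  exact fun a b hab => this (mem_univ a) (mem_univ b) hab

lemma orb_cont : Continuous P.orb := P.flow_cont _

/-- The orbit converges to `(0,0)` at `+∞`. -/
lemma orb_tendsto_top : Tendsto P.orb atTop (𝓝 (0, 0)) := by
  have hIbdd : BddBelow (range (fun t => (P.orb t).1)) := by
    refine ⟨0, fun y hy => ?_⟩
    obtain ⟨t, rfl⟩ := hy
    exact (P.Rg_bounds (P.orb_mem_Rg t)).2.2.2.2
  have hJbdd : BddBelow (range (fun t => (P.orb t).2)) := by
    refine ⟨0, fun y hy => ?_⟩
    obtain ⟨t, rfl⟩ := hy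
    exact (P.Rg_bounds (P.orb_mem_Rg t)).1
  have hI := tendsto_atTop_ciInf P.orb_I_antitone hIbdd
  have hJ := tendsto_atTop_ciInf P.orb_J_antitone hJbdd
  set LI := ⨅ t, (P.orb t).1
  set LJ := ⨅ t, (P.orb t).2
  have hlim : Tendsto P.orb atTop (𝓝 (LI, LJ)) := by
    have := hI.prodMk_nhds hJ
    exact this
  have hRg : (LI, LJ) ∈ P.Rg :=
    P.isClosed_Rg.mem_of_tendsto hlim (Eventually.of_forall (fun t => P.orb_mem_Rg t))
  have heq : P.w (LI, LJ) = 0 := P.limit_equilibrium P.orb_deriv hlim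
  rcases P.equilibria hRg heq with h | h
  · rwa [h] at hlim
  · exfalso
    have hLI : LI ≤ (P.orb 0).1 := ciInf_le hIbdd 0
    have h0 : (P.orb 0).1 = 3 / 4 * P.A := by
      rw [orb, P.flow_zero]; exact P.qstar_fst
    have hA := P.A_pos
    have : LI = P.A := by
      have := congrArg Prod.fst h
      simpa using this
    rw [h0] at hLI
    linarith

/-- The orbit converges to `(A,A)` at `-∞`. -/
lemma orb_tendsto_bot : Tendsto P.orb atBot (𝓝 (P.A, P.A)) := by
  have hIbdd : BddAbove (range (fun t => (P.orb t).1)) := by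
    refine ⟨P.A, fun y hy => ?_⟩
    obtain ⟨t, rfl⟩ := hy
    exact (P.Rg_bounds (P.orb_mem_Rg t)).2.2.1
  have hJbdd : BddAbove (range (fun t => (P.orb t).2)) := by
    refine ⟨P.A, fun y hy => ?_⟩
    obtain ⟨t, rfl⟩ := hy
    exact (P.Rg_bounds (P.orb_mem_Rg t)).2.2.2.1
  have hI := tendsto_atBot_ciSup P.orb_I_antitone hIbdd
  have hJ := tendsto_atBot_ciSup P.orb_J_antitone hJbdd
  set LI := ⨆ t, (P.orb t).1
  set LJ := ⨆ t, (P.orb t).2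
  have hlim : Tendsto P.orb atBot (𝓝 (LI, LJ)) := hI.prodMk_nhds hJ
  have hRg : (LI, LJ) ∈ P.Rg :=
    P.isClosed_Rg.mem_of_tendsto hlim (Eventually.of_forall (fun t => P.orb_mem_Rg t))
  have heq : P.w (LI, LJ) = 0 := P.limit_equilibrium_bot P.orb_deriv hlim
  rcases P.equilibria hRg heq with h | h
  · exfalso
    have hLI : (P.orb (-1)).1 ≤ LI := le_ciSup hIbdd (-1)
    have hlb : 3 / 4 * P.A ≤ (P.orb (-1)).1 := P.orb_fst_lb (by norm_num)
    have hA := P.A_pos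
    have : LI = 0 := by
      have := congrArg Prod.fst h
      simpa using this
    linarith
  · rwa [h] at hlim

lemma key_alg {J : ℝ} (hD : (1 + P.σ * (1 - J)) ≠ 0) :
    P.b1 * P.h J = P.β * ((1 - J) / (1 + P.σ * (1 - J)) - P.γ / P.β) := by
  have hβ := P.hβ
  have hb := P.b1_pos
  rw [Dat.h, Dat.Dn, Dat.A, Dat.b1]
  have hb' : P.β - P.σ * P.γ ≠ 0 := by rw [Dat.b1] at hb; linarith
  field_simp
  ring

lemma ode_identity {p : ℝ × ℝ} (hp : p ∈ P.Rg) :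
    P.c * ((P.vf p).2 - (P.vf p).1) = -P.c * (P.c * (p.2 - p.1)) - P.β * p.1 *
      ((1 - p.1 - P.c * (p.2 - p.1) / P.c) / (1 + P.σ * (1 - p.1 - P.c * (p.2 - p.1) / P.c))
        - P.γ / P.β) := by
  have hc := P.c_pos
  have h2 := (P.Rg_bounds hp).2.2.2.1
  have hD := P.Dn_pos (le_trans h2 P.A_lt_one.le)
  have hD' : (1 + P.σ * (1 - p.2)) ≠ 0 := by rw [Dat.Dn] at hD; linarith
  have hsimp : 1 - p.1 - P.c * (p.2 - p.1) / P.c = 1 - p.2 := by rw [mul_div_cancel_left₀ _ hc.ne']; ring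
  rw [hsimp]
  have hkey := P.key_alg hD'
  show P.c * (-(P.b1 / P.c) * p.1 * P.h p.2 - P.c * (p.2 - p.1)) = _
  have hcb : P.c * (P.b1 / P.c) = P.b1 := by field_simp
  calc P.c * (-(P.b1 / P.c) * p.1 * P.h p.2 - P.c * (p.2 - p.1))
      = -(P.c * (P.b1 / P.c)) * (p.1 * P.h p.2) - P.c * (P.c * (p.2 - p.1)) := by ring
    _ = -(P.b1 * P.h p.2) * p.1 - P.c * (P.c * (p.2 - p.1)) := by rw [hcb]; ring
    _ = -(P.β * ((1 - p.2) / (1 + P.σ * (1 - p.2)) - P.γ / P.β)) * p.1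
          - P.c * (P.c * (p.2 - p.1)) := by rw [hkey]
    _ = -P.c * (P.c * (p.2 - p.1)) - P.β * p.1 *
          ((1 - p.2) / (1 + P.σ * (1 - p.2)) - P.γ / P.β) := by ring

end Dat

end SISHet

open SISHet Filter Topology

/-- Lemma 1 (Case 3): for every σ ≥ 0, β, γ > 0 with β > γ(1+σ) and every speed
c ≥ 2√((β−(1+σ)γ)/(1+σ)), the reduced planar system `I' = V`,
`V' = −cV − βI((1−I−V/c)/(1+σ(1−I−V/c)) − γ/β)` has a heteroclinic orbit
connecting the saddle Ā = (1−γ/(β−σγ), 0) at −∞ to the node B̄ = (0,0) at +∞. -/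
theorem sis_planar_heteroclinic_case3
    (σ β γ : ℝ) (hσ : 0 ≤ σ) (hβ : 0 < β) (hγ : 0 < γ)
    (hβγ : γ * (1 + σ) < β) (c : ℝ)
    (hc : 2 * Real.sqrt ((β - (1 + σ) * γ) / (1 + σ)) ≤ c) :
    ∃ I V : ℝ → ℝ, ContDiff ℝ 1 I ∧ ContDiff ℝ 1 V ∧
      (∀ y : ℝ, deriv I y = V y) ∧
      (∀ y : ℝ, deriv V y = -c * V y
          - β * I y * ((1 - I y - V y / c) / (1 + σ * (1 - I y - V y / c)) - γ / β)) ∧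
      Filter.Tendsto (fun y : ℝ => (I y, V y)) Filter.atBot
        (nhds (1 - γ / (β - σ * γ), 0)) ∧
      Filter.Tendsto (fun y : ℝ => (I y, V y)) Filter.atTop
        (nhds ((0 : ℝ), (0 : ℝ))) := by
  set P : Dat := ⟨σ, β, γ, c, hσ, hβ, hγ, hβγ, hc⟩ with hP
  set If : ℝ → ℝ := fun t => (P.orb t).1 with hIf
  set Vf : ℝ → ℝ := fun t => c * ((P.orb t).2 - (P.orb t).1) with hVf
  have hVf_eq_w : ∀ t, (P.w (P.orb t)).1 = Vf t := by
    intro t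
    rw [P.w_eq (P.orb_mem_Rg t)]
    rfl
  have hderivI : ∀ t, HasDerivAt If (Vf t) t := by
    intro t
    have := SISHet.hasDerivAt_fst (P.orb_deriv t)
    rwa [hVf_eq_w t] at this
  have hderivV : ∀ t, HasDerivAt Vf (c * ((P.w (P.orb t)).2 - (P.w (P.orb t)).1)) t := by
    intro t
    exact ((SISHet.hasDerivAt_snd (P.orb_deriv t)).sub
      (SISHet.hasDerivAt_fst (P.orb_deriv t))).const_mul c
  have hwc : Continuous (fun t => P.w (P.orb t)) := P.lip_w.continuous.comp P.orb_cont
  refine ⟨If, Vf, ?_, ?_, ?_, ?_, ?_, ?_⟩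
  · rw [contDiff_one_iff_deriv]
    constructor
    · exact fun t => (hderivI t).differentiableAt
    · have : deriv If = Vf := funext fun t => (hderivI t).deriv
      rw [this, hVf]
      exact continuous_const.mul ((continuous_snd.comp P.orb_cont).sub
        (continuous_fst.comp P.orb_cont))
  · rw [contDiff_one_iff_deriv]
    constructor
    · exact fun t => (hderivV t).differentiableAt
    · have : deriv Vf = fun t => c * ((P.w (P.orb t)).2 - (P.w (P.orb t)).1) :=
        funext fun t => (hderivV t).deriv
      rw [this]
      exact continuous_const.mul ((continuous_snd.comp hwc).sub (continuous_fst.comp hwc))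
  · exact fun t => (hderivI t).deriv
  · intro t
    rw [(hderivV t).deriv]
    have hmem := P.orb_mem_Rg t
    rw [P.w_eq hmem]
    have := P.ode_identity hmem
    exact this
  · -- atBot limit
    have hG : Continuous (fun p : ℝ × ℝ => (p.1, c * (p.2 - p.1))) :=
      continuous_fst.prodMk (continuous_const.mul (continuous_snd.sub continuous_fst))
    have h1 := (hG.tendsto (P.A, P.A)).comp P.orb_tendsto_bot
    have h2 : (((P.A, P.A).1 : ℝ), c * ((P.A, P.A).2 - (P.A, P.A).1))
        = ((1 - γ / (β - σ * γ) : ℝ), (0 : ℝ)) := by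
      show ((P.A, c * (P.A - P.A)) : ℝ × ℝ) = _
      rw [show c * (P.A - P.A) = 0 by ring]
      rfl
    rw [h2] at h1
    exact h1
  · -- atTop limit
    have hG : Continuous (fun p : ℝ × ℝ => (p.1, c * (p.2 - p.1))) :=
      continuous_fst.prodMk (continuous_const.mul (continuous_snd.sub continuous_fst))
    have h1 := (hG.tendsto ((0:ℝ), (0:ℝ))).comp P.orb_tendsto_top
    have h2 : ((((0:ℝ), (0:ℝ)) : ℝ × ℝ).1, c * ((((0:ℝ),(0:ℝ)) : ℝ × ℝ).2 - (((0:ℝ),(0:ℝ)) : ℝ × ℝ).1))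
        = (((0 : ℝ), (0 : ℝ)) : ℝ × ℝ) := by
      show (((0:ℝ), c * ((0:ℝ) - 0)) : ℝ × ℝ) = _
      rw [show c * ((0:ℝ) - 0) = 0 by ring]
    rw [h2] at h1
    exact h1
end
end

section
/- Let σ ≥ 0, c > 0, and β, γ > 0 with β > γ(1+σ). Consider the planar vector field F(S, I) = (−c·(I + S − 1), −(β/c)·I·(S/(1+σS) − γ/β)). The derivative (Jacobian matrix) of F at the equilibrium Ã = (γ/(β−γσ), 1 − γ/(β−γσ)) has the two real eigenvalues λ₁ = (−c + √(c² + 4(β−σγ)(β−(1+σ)γ)/β))/2 and λ₂ = (−c − √(c² + 4(β−σγ)(β−(1+σ)γ)/β))/2, and λ₁ > 0 while λ₂ < 0, so Ã is a saddle. -/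
open Real ContinuousLinearMap


/-- Linearization of the reduced planar system
`S' = −c(I+S−1)`, `I' = −(β/c)I(S/(1+σS) − γ/β)` at the endemic equilibrium
à = (γ/(β−γσ), 1−γ/(β−γσ)): its Jacobian has the real eigenvalues
`λ₁ = (−c + √(c² + 4(β−σγ)(β−(1+σ)γ)/β))/2` and
`λ₂ = (−c − √(c² + 4(β−σγ)(β−(1+σ)γ)/β))/2`, with λ₁ > 0 and λ₂ < 0
(so à is a saddle). -/
theorem sis_case2_linearization_at_A
    (σ β γ c : ℝ) (hσ : 0 ≤ σ) (hβ : 0 < β) (hγ : 0 < γ) (hc : 0 < c)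
    (hβγ : γ * (1 + σ) < β)
    (F : ℝ × ℝ → ℝ × ℝ)
    (hF : F = fun p => (-c * (p.2 + p.1 - 1),
        -(β / c) * p.2 * (p.1 / (1 + σ * p.1) - γ / β))) :
    Module.End.HasEigenvalue
      (fderiv ℝ F (γ / (β - γ * σ), 1 - γ / (β - γ * σ))).toLinearMap
      ((-c + Real.sqrt (c ^ 2 + 4 * (β - σ * γ) * (β - (1 + σ) * γ) / β)) / 2) ∧
    Module.End.HasEigenvalue
      (fderiv ℝ F (γ / (β - γ * σ), 1 - γ / (β - γ * σ))).toLinearMap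
      ((-c - Real.sqrt (c ^ 2 + 4 * (β - σ * γ) * (β - (1 + σ) * γ) / β)) / 2) ∧
    0 < (-c + Real.sqrt (c ^ 2 + 4 * (β - σ * γ) * (β - (1 + σ) * γ) / β)) / 2 ∧
    (-c - Real.sqrt (c ^ 2 + 4 * (β - σ * γ) * (β - (1 + σ) * γ) / β)) / 2 < 0 := by
  subst hF
  have hb : 0 < β - γ * σ := by nlinarith
  have hbg : 0 < β - (1 + σ) * γ := by nlinarith
  set k : ℝ := (β - σ * γ) * (β - (1 + σ) * γ) / β with hk
  have hkpos : 0 < k := by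
    apply div_pos _ hβ; nlinarith
  set S : ℝ := γ / (β - γ * σ) with hSdef
  set I : ℝ := 1 - γ / (β - γ * σ) with hIdef
  have hD : 1 + σ * S = β / (β - γ * σ) := by
    rw [hSdef, eq_div_iff hb.ne', add_mul, mul_assoc, div_mul_cancel₀ _ hb.ne']; ring
  have hDne : 1 + σ * S ≠ 0 := by rw [hD]; positivity
  have hIeq : I = (β - (1 + σ) * γ) / (β - γ * σ) := by
    rw [hIdef]; field_simp; ring
  -- first coordinate derivative
  have h1 : HasFDerivAt (fun p : ℝ × ℝ => -c * (p.2 + p.1 - 1))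
      ((-c) • ((snd ℝ ℝ ℝ) + (fst ℝ ℝ ℝ))) (S, I) :=
    ((hasFDerivAt_snd.add hasFDerivAt_fst).sub_const 1).const_mul (-c)
  -- scalar derivative of x ↦ x/(1+σx) - γ/β at S
  have hq : HasDerivAt (fun x : ℝ => x / (1 + σ * x) - γ / β)
      ((1 * (1 + σ * S) - S * (0 + σ * 1)) / (1 + σ * S) ^ 2) S :=
    ((hasDerivAt_id S).div ((hasDerivAt_const S 1).add ((hasDerivAt_id S).const_mul σ)) hDne).sub_const _
  have hm : (1 * (1 + σ * S) - S * (0 + σ * 1)) / (1 + σ * S) ^ 2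
      = ((β - γ * σ) / β) ^ 2 := by
    rw [hD, hSdef]; field_simp; ring
  rw [hm] at hq
  have hq2 : HasFDerivAt (fun p : ℝ × ℝ => p.1 / (1 + σ * p.1) - γ / β)
      (((β - γ * σ) / β) ^ 2 • (fst ℝ ℝ ℝ)) (S, I) :=
    hq.comp_hasFDerivAt (f := Prod.fst) (S, I) hasFDerivAt_fst
  have hu : HasFDerivAt (fun p : ℝ × ℝ => -(β / c) * p.2)
      ((-(β / c)) • (snd ℝ ℝ ℝ)) (S, I) := hasFDerivAt_snd.const_mul _
  have h2 := hu.mul hq2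
  have hL : HasFDerivAt
      (fun p : ℝ × ℝ => (-c * (p.2 + p.1 - 1),
        -(β / c) * p.2 * (p.1 / (1 + σ * p.1) - γ / β)))
      (((-c) • ((snd ℝ ℝ ℝ) + (fst ℝ ℝ ℝ))).prod
        ((-(β / c) * (S, I).2) • (((β - γ * σ) / β) ^ 2 • (fst ℝ ℝ ℝ))
          + ((S, I).1 / (1 + σ * (S, I).1) - γ / β) • ((-(β / c)) • (snd ℝ ℝ ℝ))))
      (S, I) := h1.prodMk h2
  rw [hL.fderiv]
  set L := (((-c) • ((snd ℝ ℝ ℝ) + (fst ℝ ℝ ℝ))).prod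
        ((-(β / c) * (S, I).2) • (((β - γ * σ) / β) ^ 2 • (fst ℝ ℝ ℝ))
          + ((S, I).1 / (1 + σ * (S, I).1) - γ / β) • ((-(β / c)) • (snd ℝ ℝ ℝ)))) with hLdef
  have hzero : S / (1 + σ * S) - γ / β = 0 := by
    rw [hD, hSdef]; field_simp; ring
  have key : ∀ lam : ℝ, lam ^ 2 + c * lam - k = 0 →
      Module.End.HasEigenvalue L.toLinearMap lam := by
    intro lam hlam
    apply Module.End.hasEigenvalue_of_hasEigenvector (x := (c * lam, -k))
    constructor
    · rw [Module.End.mem_eigenspace_iff]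
      show L (c * lam, -k) = lam • (c * lam, -k)
      rw [hLdef]
      simp only [prod_apply, add_apply, ContinuousLinearMap.smul_apply,
        coe_fst', coe_snd', smul_eq_mul, Prod.smul_mk, Prod.mk.injEq]
      constructor
      · linear_combination (-c) * hlam
      · rw [hzero, hIeq, hk]
        field_simp
        ring
    · intro h
      have := congrArg Prod.snd h
      simp at this
      exact absurd this (by linarith)
  have hd : c ^ 2 + 4 * (β - σ * γ) * (β - (1 + σ) * γ) / β = c ^ 2 + 4 * k := by
    rw [hk]; ring
  rw [hd]
  set r := Real.sqrt (c ^ 2 + 4 * k) with hr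
  have hr2 : r ^ 2 = c ^ 2 + 4 * k := Real.sq_sqrt (by positivity)
  have hrnn : 0 ≤ r := Real.sqrt_nonneg _
  have hrc : c < r := by nlinarith
  refine ⟨key _ (by linear_combination hr2 / 4), key _ (by linear_combination hr2 / 4),
    by linarith, by linarith⟩
end

section
/- Let σ ≥ 0, c > 0, and β, γ > 0 with β > γ(1+σ). Consider the planar vector field G(I, V) = (V, −c·V − β·I·((1 − I − V/c)/(1 + σ(1 − I − V/c)) − γ/β)). The derivative (Jacobian matrix) of G at the equilibrium Ā = (1 − γ/(β−γσ), 0) has the two real eigenvalues λ₁ = −c and λ₂ = (β − (1+σ)γ)(β − γσ)/(cβ), with λ₁ < 0 < λ₂, so Ā is a saddle. -/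
open ContinuousLinearMap


/-- Linearization of the reduced planar system
`I' = V`, `V' = −cV − βI((1−I−V/c)/(1+σ(1−I−V/c)) − γ/β)` at the equilibrium
Ā = (1−γ/(β−γσ), 0): its Jacobian has the real eigenvalues `λ₁ = −c` and
`λ₂ = (β−(1+σ)γ)(β−γσ)/(cβ)`, with λ₁ < 0 < λ₂ (so Ā is a saddle). -/
theorem sis_case3_linearization_at_A
    (σ β γ c : ℝ) (hσ : 0 ≤ σ) (hβ : 0 < β) (hγ : 0 < γ) (hc : 0 < c)
    (hβγ : γ * (1 + σ) < β)
    (G : ℝ × ℝ → ℝ × ℝ)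
    (hG : G = fun p => (p.2,
        -c * p.2 - β * p.1 * ((1 - p.1 - p.2 / c) / (1 + σ * (1 - p.1 - p.2 / c)) - γ / β))) :
    Module.End.HasEigenvalue
      (fderiv ℝ G (1 - γ / (β - γ * σ), (0 : ℝ))).toLinearMap (-c) ∧
    Module.End.HasEigenvalue
      (fderiv ℝ G (1 - γ / (β - γ * σ), (0 : ℝ))).toLinearMap
      ((β - (1 + σ) * γ) * (β - γ * σ) / (c * β)) ∧
    (-c < 0) ∧ (0 < (β - (1 + σ) * γ) * (β - γ * σ) / (c * β)) := by
  have hA : 0 < β - γ * σ := by nlinarith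
  set P : ℝ × ℝ := (1 - γ / (β - γ * σ), (0:ℝ)) with hPdef
  set u : ℝ := γ / (β - γ * σ) with hu
  have hsP : 1 - P.1 - P.2 / c = u := by simp [hPdef]
  have hune : 1 + σ * u ≠ 0 := by positivity
  -- derivative of the affine map s
  have hf1 : HasFDerivAt (fun p : ℝ × ℝ => p.1) (fst ℝ ℝ ℝ) P := hasFDerivAt_fst
  have hf2 : HasFDerivAt (fun p : ℝ × ℝ => p.2) (snd ℝ ℝ ℝ) P := hasFDerivAt_snd
  have hs : HasFDerivAt (fun p : ℝ × ℝ => 1 - p.1 - p.2 / c)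
      ((0 : (ℝ×ℝ) →L[ℝ] ℝ) - fst ℝ ℝ ℝ - c⁻¹ • snd ℝ ℝ ℝ) P := by
    have h := ((hasFDerivAt_const (1:ℝ) P).sub hf1).sub (hf2.mul_const c⁻¹)
    exact h.congr_of_eventuallyEq (Filter.Eventually.of_forall fun p => by simp [div_eq_mul_inv])
  -- scalar derivative of h(t) = t / (1 + σ t) at u
  have hh : HasDerivAt (fun t : ℝ => t / (1 + σ * t))
      ((1 * (1 + σ * u) - u * (0 + σ * 1)) / (1 + σ * u) ^ 2) u := by
    exact (hasDerivAt_id u).div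
      ((hasDerivAt_const u (1:ℝ)).add ((hasDerivAt_id u).const_mul σ)) hune
  -- composition
  have hq : HasFDerivAt
      (fun p : ℝ × ℝ => (1 - p.1 - p.2 / c) / (1 + σ * (1 - p.1 - p.2 / c)))
      (((1 * (1 + σ * u) - u * (0 + σ * 1)) / (1 + σ * u) ^ 2) •
        ((0 : (ℝ×ℝ) →L[ℝ] ℝ) - fst ℝ ℝ ℝ - c⁻¹ • snd ℝ ℝ ℝ)) P := by
    have := hh.comp_hasFDerivAt_of_eq P hs hsP.symm
    simpa [Function.comp_def] using this
  -- second component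
  have h2 := (hf2.const_mul (-c)).sub ((hf1.const_mul β).mul (hq.sub_const (γ/β)))
  have hGd : HasFDerivAt G ((snd ℝ ℝ ℝ).prod
      (-c • snd ℝ ℝ ℝ -
        ((β * P.1) • ((1 * (1 + σ * u) - u * (0 + σ * 1)) / (1 + σ * u) ^ 2) •
            (0 - fst ℝ ℝ ℝ - c⁻¹ • snd ℝ ℝ ℝ) +
          ((1 - P.1 - P.2 / c) / (1 + σ * (1 - P.1 - P.2 / c)) - γ / β) • β • fst ℝ ℝ ℝ))) P := by
    rw [hG]; exact hf2.prodMk h2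
  have hfd := hGd.fderiv
  have eig : ∀ l : ℝ, (fderiv ℝ G P) (1, l) = l • ((1:ℝ), l) →
      Module.End.HasEigenvalue (fderiv ℝ G P).toLinearMap l := by
    intro l h
    exact Module.End.hasEigenvalue_of_hasEigenvector
      ⟨Module.End.mem_eigenspace_iff.2 h, by norm_num [Prod.ext_iff]⟩
  have hc' := hc.ne'
  have hβ' := hβ.ne'
  have hA' := hA.ne'
  have hpos : 0 < (β - (1 + σ) * γ) * (β - γ * σ) / (c * β) := by
    have h1 : 0 < β - (1 + σ) * γ := by nlinarith
    positivity
  refine ⟨eig (-c) ?_, eig _ ?_, by linarith, hpos⟩ <;>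
  · rw [hfd]
    simp only [hPdef, hu, ContinuousLinearMap.prod_apply, ContinuousLinearMap.add_apply,
      ContinuousLinearMap.sub_apply, ContinuousLinearMap.smul_apply, coe_fst', coe_snd',
      ContinuousLinearMap.zero_apply, smul_eq_mul, Prod.smul_mk, Prod.mk.injEq]
    constructor
    · ring
    · have hA'' : β - σ * γ ≠ 0 := by rw [mul_comm]; exact hA'
      field_simp
      ring_nf
      field_simp
      ring
end

section
/- Let σ ≥ 0 and β, γ > 0 with β > γ(1+σ), let c satisfy c ≥ 2·√((β − (1+σ)γ)/(1+σ)), set p = 1 − γ/(β−γσ), and let r be any real number with (c − √(c² − 4(β−(1+σ)γ)/(1+σ)))/2 < r < (c + √(c² − 4(β−(1+σ)γ)/(1+σ)))/2. Then for every t ∈ (0, 1): r² − c·r + β·((c + t·p·(r − c))/(c + σ·(c + t·p·(r − c))) − γ/β) < 0. (This sign condition means the vector field of the reduced planar system points strictly into the triangle △ĀB̄M along its slanted side V = −rI, establishing the trapping region in the case of fast-diffusing infected population.) -/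
set_option maxHeartbeats 1600000 in
/-- The trapping-region inequality along the slanted side of the triangle
△ĀB̄M in the fast-infected-diffusion regime: for β > γ(1+σ),
c ≥ 2√((β−(1+σ)γ)/(1+σ)), p = 1 − γ/(β−γσ), and any slope r strictly between
the two roots (c ∓ √(c² − 4(β−(1+σ)γ)/(1+σ)))/2, one has, for every t ∈ (0,1),
`r² − cr + β((c + tp(r−c))/(c + σ(c + tp(r−c))) − γ/β) < 0`. -/
theorem sis_case3_slanted_side_inequality
    (σ β γ c p r : ℝ) (hσ : 0 ≤ σ) (hβ : 0 < β) (hγ : 0 < γ)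
    (hβγ : γ * (1 + σ) < β)
    (hc : 2 * Real.sqrt ((β - (1 + σ) * γ) / (1 + σ)) ≤ c)
    (hp : p = 1 - γ / (β - γ * σ))
    (hr₁ : (c - Real.sqrt (c ^ 2 - 4 * (β - (1 + σ) * γ) / (1 + σ))) / 2 < r)
    (hr₂ : r < (c + Real.sqrt (c ^ 2 - 4 * (β - (1 + σ) * γ) / (1 + σ))) / 2) :
    ∀ t ∈ Set.Ioo (0 : ℝ) 1,
      r ^ 2 - c * r
        + β * ((c + t * p * (r - c)) / (c + σ * (c + t * p * (r - c))) - γ / β)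
        < 0 := by
  intro t ht
  obtain ⟨ht0, ht1⟩ := ht
  have h1σ : (0:ℝ) < 1 + σ := by linarith
  set q : ℝ := (β - (1 + σ) * γ) / (1 + σ) with hqdef
  have hq : 0 < q := div_pos (by nlinarith) h1σ
  have hqmul : q * (1 + σ) = β - (1 + σ) * γ := by
    rw [hqdef]; field_simp
  have hc0 : 0 < c := lt_of_lt_of_le (by positivity) hc
  have hcq : 4 * q ≤ c ^ 2 := by
    nlinarith [Real.sq_sqrt hq.le, Real.sqrt_nonneg q, hc]
  have hinner : c ^ 2 - 4 * (β - (1 + σ) * γ) / (1 + σ) = c ^ 2 - 4 * q := by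
    rw [hqdef]; ring
  rw [hinner] at hr₁ hr₂
  set s : ℝ := Real.sqrt (c ^ 2 - 4 * q) with hsdef
  have hs0 : 0 ≤ s := Real.sqrt_nonneg _
  have hs2 : s ^ 2 = c ^ 2 - 4 * q := Real.sq_sqrt (by linarith)
  have hsc : s ≤ c := by
    nlinarith [hs2, hs0, hc0]
  have hrq : r ^ 2 - c * r + q < 0 := by nlinarith [hr₁, hr₂, hs2]
  have hr0 : 0 < r := by linarith
  have hrc : r < c := by linarith
  have hβγσ : 0 < β - γ * σ := by nlinarith
  have hp0 : 0 < p := by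
    rw [hp]
    have : γ / (β - γ * σ) < 1 := (div_lt_one hβγσ).mpr (by nlinarith)
    linarith
  have hp1 : p < 1 := by
    rw [hp]
    have : 0 < γ / (β - γ * σ) := div_pos hγ hβγσ
    linarith
  set x : ℝ := c + t * p * (r - c) with hxdef
  have hxc : x < c := by
    have h := mul_neg_of_pos_of_neg (mul_pos ht0 hp0) (show r - c < 0 by linarith)
    rw [hxdef]; linarith
  have htp1 : t * p < 1 := by nlinarith
  have hxr : r < x := by
    have ha : (0:ℝ) < 1 - t * p := by linarith
    have hb : (0:ℝ) < c - r := by linarith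
    have h := mul_pos ha hb
    have h2 : (1 - t * p) * (c - r) = (c + t * p * (r - c)) - r := by ring
    rw [hxdef]; linarith [h2 ▸ h]
  have hx0 : 0 < x := lt_trans hr0 hxr
  have hd : 0 < c + σ * x := by positivity
  have hkey : β * (x / (c + σ * x) - γ / β) ≤ q := by
    have heq : β * (x / (c + σ * x) - γ / β) = (β * x - γ * (c + σ * x)) / (c + σ * x) := by
      field_simp
    rw [heq, div_le_iff₀ hd]
    have h2 : (1 + σ) * (β * x - γ * (c + σ * x)) ≤ (β - (1 + σ) * γ) * (c + σ * x) := by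
      nlinarith [mul_nonneg hβ.le (sub_nonneg.mpr hxc.le)]
    have h3 : (1 + σ) * (q * (c + σ * x)) = (β - (1 + σ) * γ) * (c + σ * x) := by
      rw [← hqmul]; ring
    have h4 : (1 + σ) * (β * x - γ * (c + σ * x)) ≤ (1 + σ) * (q * (c + σ * x)) := by
      rw [h3]; exact h2
    exact le_of_mul_le_mul_left h4 h1σ
  linarith [hkey, hrq]
end
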